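/- The generating function 𝓕 = ∑_{n≥1} s_{δ_n/δ_{n-2}} for staircase ribbon Schur functions satisfies the functional equation 𝓕(x₁, x₂, …) - 𝓕(x₂, x₃, …) = x₁ + x₁·𝓕(x₂, x₃, …)·𝓕(x₁, x₂, …). -/

import Mathlib

/-!
STATEMENT 2: Let 𝓕 = ∑_{n≥1} s_{δ_n/δ_{n-2}}.  Then
𝓕(x₁, x₂, …) - 𝓕(x₂, x₃, …) = x₁ + x₁ · 𝓕(x₂, x₃, …) · 𝓕(x₁, x₂, …).

We define, for `lo ≥ 1`, the series `F lo` counting semistandard Young tableaux of the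
ribbon shapes δ_n/δ_{n-2} (n ≥ 1) with all entries ≥ lo; thus `F 1 = 𝓕(x₁, x₂, …)` and
`F 2 = 𝓕(x₂, x₃, …)`.  Variables are indexed by ℕ, `X k` standing for x_k (k ≥ 1).
-/

open Finset
noncomputable section

/-- The cells of the ribbon skew shape δ_n/δ_{n-2} (rows and columns 1-indexed):
row `i` (1 ≤ i ≤ n) contains the cells in columns `max 1 (n - i) ≤ j ≤ n + 1 - i`.
For n = 1 this is the single cell of δ₁ (interpreting δ_{-1} = ∅). -/
def ribbonCells (n : ℕ) : Finset (ℕ × ℕ) :=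
  (Finset.Icc 1 n ×ˢ Finset.Icc 1 n).filter
    (fun c => n - c.1 ≤ c.2 ∧ c.2 ≤ n + 1 - c.1)

/-- A semistandard Young tableau of shape δ_n/δ_{n-2} with all entries `≥ lo`:
rows weakly increase, columns strictly increase. -/
structure RibbonSSYT (n lo : ℕ) where
  entry : ℕ × ℕ → ℕ
  lo_le : ∀ c ∈ ribbonCells n, lo ≤ entry c
  outside : ∀ c ∉ ribbonCells n, entry c = 0
  rowWeak : ∀ i j, (i, j) ∈ ribbonCells n → (i, j + 1) ∈ ribbonCells n →
    entry (i, j) ≤ entry (i, j + 1)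
  colStrict : ∀ i j, (i, j) ∈ ribbonCells n → (i + 1, j) ∈ ribbonCells n →
    entry (i, j) < entry (i + 1, j)

/-- The generating function `∑_{n ≥ 1} s_{δ_n/δ_{n-2}}` in the variables `x_lo, x_{lo+1}, …`:
the coefficient of the monomial `m` is the number of pairs `(n, T)` with `n ≥ 1` and `T`
a SSYT of shape δ_n/δ_{n-2} with entries ≥ lo, whose content is `m`. -/
def F (lo : ℕ) : MvPowerSeries ℕ ℚ :=
  fun m => (Nat.card {p : (n : ℕ) × RibbonSSYT n lo //
    1 ≤ p.1 ∧ ∀ k, ((ribbonCells p.1).filter (fun c => p.2.entry c = k)).card = m k} : ℚ)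

lemma mem_ribbonCells {n i j : ℕ} :
    (i, j) ∈ ribbonCells n ↔ 1 ≤ i ∧ 1 ≤ j ∧ n ≤ i + j ∧ i + j ≤ n + 1 := by
  simp only [ribbonCells, Finset.mem_filter, Finset.mem_product, Finset.mem_Icc]
  omega

lemma mem_ribbonCells' {n : ℕ} {c : ℕ × ℕ} :
    c ∈ ribbonCells n ↔ 1 ≤ c.1 ∧ 1 ≤ c.2 ∧ n ≤ c.1 + c.2 ∧ c.1 + c.2 ≤ n + 1 := by
  cases c; exact mem_ribbonCells

lemma RibbonSSYT.ext' {n lo : ℕ} {T T' : RibbonSSYT n lo} (h : T.entry = T'.entry) : T = T' := by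
  cases T; cases T'; cases h; rfl

def TabSet (lo : ℕ) (m : ℕ →₀ ℕ) :=
  {p : (n : ℕ) × RibbonSSYT n lo //
    1 ≤ p.1 ∧ ∀ k, ((ribbonCells p.1).filter (fun c => p.2.entry c = k)).card = m k}

/-- rows inject into cells -/
lemma n_le_card_cells (n : ℕ) : n ≤ (ribbonCells n).card := by
  have : (Finset.Icc 1 n).card ≤ (ribbonCells n).card := by
    apply Finset.card_le_card_of_injOn (fun i => (i, n + 1 - i))
    · intro i hi
      simp only [Finset.mem_coe, Finset.mem_Icc] at hi ⊢
      rw [mem_ribbonCells]; omega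
    · intro a ha b hb hab
      exact (Prod.mk.injEq _ _ _ _).mp hab |>.1
  simpa using this

lemma card_cells_le {n lo : ℕ} (T : RibbonSSYT n lo) (m : ℕ →₀ ℕ)
    (hm : ∀ k, ((ribbonCells n).filter (fun c => T.entry c = k)).card = m k) :
    (ribbonCells n).card ≤ m.sum fun _ v => v := by
  have hsub : ribbonCells n ⊆ m.support.biUnion
      (fun k => (ribbonCells n).filter (fun c => T.entry c = k)) := by
    intro c hc
    rw [Finset.mem_biUnion]
    refine ⟨T.entry c, ?_, by simp [hc]⟩
    rw [Finsupp.mem_support_iff, ← hm (T.entry c)]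
    rw [← Nat.pos_iff_ne_zero, Finset.card_pos]
    exact ⟨c, by simp [hc]⟩
  calc (ribbonCells n).card ≤ _ := Finset.card_le_card hsub
    _ ≤ ∑ k ∈ m.support, ((ribbonCells n).filter (fun c => T.entry c = k)).card :=
        Finset.card_biUnion_le
    _ = m.sum fun _ v => v := by
        rw [Finsupp.sum]; exact Finset.sum_congr rfl fun k _ => hm k

lemma entry_le {n lo : ℕ} (T : RibbonSSYT n lo) (m : ℕ →₀ ℕ)
    (hm : ∀ k, ((ribbonCells n).filter (fun c => T.entry c = k)).card = m k)
    (c : ℕ × ℕ) : T.entry c ≤ m.support.sup id := by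
  by_cases hc : c ∈ ribbonCells n
  · have : T.entry c ∈ m.support := by
      rw [Finsupp.mem_support_iff, ← hm (T.entry c), ← Nat.pos_iff_ne_zero, Finset.card_pos]
      exact ⟨c, by simp [hc]⟩
    exact Finset.le_sup (f := id) this
  · simp [T.outside c hc]

instance tabSetFinite (lo : ℕ) (m : ℕ →₀ ℕ) : Finite (TabSet lo m) := by
  set S := m.sum fun _ v => v with hS
  set C := m.support.sup id with hC
  apply Finite.of_injective (f := fun p : TabSet lo m =>
    ((⟨p.1.1, by
        have := (n_le_card_cells p.1.1).trans (card_cells_le p.1.2 m p.2.2)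
        omega⟩ : Fin (S + 1)),
     (fun q : Fin (S+1) × Fin (S+1) =>
        (⟨p.1.2.entry (q.1.val, q.2.val), Nat.lt_succ_of_le (entry_le p.1.2 m p.2.2 _)⟩
          : Fin (C + 1)))))
  rintro ⟨⟨n, T⟩, hn1, hcont⟩ ⟨⟨n', T'⟩, hn1', hcont'⟩ h
  rw [Prod.mk.injEq] at h
  obtain ⟨h1, h2⟩ := h
  simp only at h1 h2 hcont hcont' ⊢
  have hn : n = n' := by simpa using congrArg Fin.val h1
  cases hn
  have hB : n ≤ S := by
    have := (n_le_card_cells n).trans (card_cells_le T m hcont)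
    omega
  have hent : T.entry = T'.entry := by
    funext c
    obtain ⟨i, j⟩ := c
    by_cases hc : (i, j) ∈ ribbonCells n
    · have hc2 := hc
      rw [mem_ribbonCells] at hc2
      have hi : i < S + 1 := by omega
      have hj : j < S + 1 := by omega
      have := congrFun h2 (⟨i, hi⟩, ⟨j, hj⟩)
      simpa using congrArg Fin.val this
    · rw [T.outside _ hc, T'.outside _ hc]
  apply Subtype.ext
  simp only
  exact congrArg _ (RibbonSSYT.ext' hent)


def glueEntry (m₁ m₂ : ℕ) (T₁ : RibbonSSYT m₁ 1) (T₂ : RibbonSSYT m₂ 2) : ℕ × ℕ → ℕ :=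
  fun c =>
    if c ∈ ribbonCells (m₁ + m₂) then
      (if c.1 < m₁ then T₁.entry (c.1, c.2 - m₂)
       else if c.1 = m₁ then (if c.2 = m₂ then 1 else T₁.entry (m₁, c.2 - m₂))
       else T₂.entry (c.1 - m₁, c.2))
    else 0

lemma glueEntry_of_mem {m₁ m₂ : ℕ} {T₁ : RibbonSSYT m₁ 1} {T₂ : RibbonSSYT m₂ 2}
    {i j : ℕ} (hc : (i, j) ∈ ribbonCells (m₁ + m₂)) :
    glueEntry m₁ m₂ T₁ T₂ (i, j) =
      (if i < m₁ then T₁.entry (i, j - m₂)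
       else if i = m₁ then (if j = m₂ then 1 else T₁.entry (m₁, j - m₂))
       else T₂.entry (i - m₁, j)) := by
  rw [glueEntry, if_pos hc]

def glue (m₁ m₂ : ℕ) (h₁ : 1 ≤ m₁) (h₂ : 1 ≤ m₂)
    (T₁ : RibbonSSYT m₁ 1) (T₂ : RibbonSSYT m₂ 2) : RibbonSSYT (m₁ + m₂) 1 where
  entry := glueEntry m₁ m₂ T₁ T₂
  lo_le := by
    rintro ⟨i, j⟩ hc
    have hm := mem_ribbonCells.mp hc
    rw [glueEntry_of_mem hc]
    by_cases hi : i < m₁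
    · rw [if_pos hi]
      exact T₁.lo_le _ (by rw [mem_ribbonCells]; omega)
    · rw [if_neg hi]
      by_cases hieq : i = m₁
      · rw [if_pos hieq]
        by_cases hj : j = m₂
        · rw [if_pos hj]
        · rw [if_neg hj]
          exact T₁.lo_le _ (by rw [mem_ribbonCells]; omega)
      · rw [if_neg hieq]
        exact le_trans (by norm_num) (T₂.lo_le (i - m₁, j) (by rw [mem_ribbonCells]; omega))
  outside := by
    intro c hc; rw [glueEntry, if_neg hc]
  rowWeak := by
    intro i j hc hc'
    have hm := mem_ribbonCells.mp hc
    have hm' := mem_ribbonCells.mp hc'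
    rw [glueEntry_of_mem hc, glueEntry_of_mem hc']
    by_cases hi : i < m₁
    · simp only [if_pos hi]
      have he : j + 1 - m₂ = (j - m₂) + 1 := by omega
      rw [he]
      exact T₁.rowWeak i (j - m₂) (by rw [mem_ribbonCells]; omega)
        (by rw [mem_ribbonCells]; omega)
    · by_cases hieq : i = m₁
      · -- then j = m₂ and j + 1 = m₂ + 1
        have hj : j = m₂ := by omega
        have hj' : ¬(j + 1 = m₂) := by omega
        simp only [if_neg hi, if_pos hieq, if_pos hj, if_neg hj']
        have he : j + 1 - m₂ = 1 := by omega
        rw [he]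
        exact T₁.lo_le (m₁, 1) (by rw [mem_ribbonCells]; omega)
      · simp only [if_neg hi, if_neg hieq]
        exact T₂.rowWeak (i - m₁) j (by rw [mem_ribbonCells]; omega)
          (by rw [mem_ribbonCells]; omega)
  colStrict := by
    intro i j hc hc'
    have hm := mem_ribbonCells.mp hc
    have hm' := mem_ribbonCells.mp hc'
    have hij : i + j = m₁ + m₂ := by omega
    rw [glueEntry_of_mem hc, glueEntry_of_mem hc']
    by_cases h1 : i + 1 < m₁
    · simp only [if_pos h1, if_pos (show i < m₁ by omega)]
      exact T₁.colStrict i (j - m₂) (by rw [mem_ribbonCells]; omega)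
        (by rw [mem_ribbonCells]; omega)
    · by_cases h2 : i + 1 = m₁
      · have hjm : ¬(j = m₂) := by omega
        simp only [if_pos (show i < m₁ by omega), if_neg h1, if_pos h2, if_neg hjm]
        have := T₁.colStrict i (j - m₂) (by rw [mem_ribbonCells]; omega)
          (by rw [mem_ribbonCells]; omega)
        rwa [h2] at this
      · by_cases h3 : i = m₁
        · have hjm : j = m₂ := by omega
          simp only [if_neg (show ¬ i < m₁ by omega), if_pos h3, if_pos hjm,
            if_neg h1, if_neg h2]
          exact lt_of_lt_of_le (by norm_num)
            (T₂.lo_le (i + 1 - m₁, j) (by rw [mem_ribbonCells]; omega))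
        · simp only [if_neg (show ¬ i < m₁ by omega), if_neg h3, if_neg h1, if_neg h2]
          have he : i + 1 - m₁ = (i - m₁) + 1 := by omega
          rw [he]
          exact T₂.colStrict (i - m₁) j (by rw [mem_ribbonCells]; omega)
            (by rw [mem_ribbonCells]; omega)

lemma glue_entry_up (m₁ m₂ : ℕ) (h₁ : 1 ≤ m₁) (h₂ : 1 ≤ m₂)
    (T₁ : RibbonSSYT m₁ 1) (T₂ : RibbonSSYT m₂ 2) (i j : ℕ) (hj : 1 ≤ j) :
    (glue m₁ m₂ h₁ h₂ T₁ T₂).entry (i, j + m₂) = T₁.entry (i, j) := by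
  by_cases hc : (i, j) ∈ ribbonCells m₁
  · have hm := mem_ribbonCells.mp hc
    have hcn : (i, j + m₂) ∈ ribbonCells (m₁ + m₂) := by rw [mem_ribbonCells]; omega
    show glueEntry m₁ m₂ T₁ T₂ (i, j + m₂) = _
    rw [glueEntry_of_mem hcn]
    by_cases hi : i < m₁
    · rw [if_pos hi, show j + m₂ - m₂ = j by omega]
    · have hieq : i = m₁ := by omega
      have hj1 : j = 1 := by omega
      rw [if_neg hi, if_pos hieq, if_neg (show ¬(j + m₂ = m₂) by omega),
        show j + m₂ - m₂ = j by omega, hieq]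
  · have hm : ¬(1 ≤ i ∧ 1 ≤ j ∧ m₁ ≤ i + j ∧ i + j ≤ m₁ + 1) := fun h =>
      hc (mem_ribbonCells.mpr h)
    rw [T₁.outside _ hc]
    by_cases hcn : (i, j + m₂) ∈ ribbonCells (m₁ + m₂)
    · have hmn := mem_ribbonCells.mp hcn
      show glueEntry m₁ m₂ T₁ T₂ (i, j + m₂) = 0
      rw [glueEntry_of_mem hcn]
      by_cases hi : i < m₁
      · rw [if_pos hi]
        exact T₁.outside _ (fun h => hm (by have := mem_ribbonCells.mp h; omega))
      · have hi2 : i ≤ m₁ := by omega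
        have hieq : i = m₁ := by omega
        rw [if_neg hi, if_pos hieq, if_neg (show ¬(j + m₂ = m₂) by omega)]
        exact T₁.outside _ (fun h => hm (by have := mem_ribbonCells.mp h; omega))
    · exact (glue m₁ m₂ h₁ h₂ T₁ T₂).outside _ hcn

lemma glue_entry_down (m₁ m₂ : ℕ) (h₁ : 1 ≤ m₁) (h₂ : 1 ≤ m₂)
    (T₁ : RibbonSSYT m₁ 1) (T₂ : RibbonSSYT m₂ 2) (i j : ℕ) (hi : 1 ≤ i) :
    (glue m₁ m₂ h₁ h₂ T₁ T₂).entry (i + m₁, j) = T₂.entry (i, j) := by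
  by_cases hc : (i, j) ∈ ribbonCells m₂
  · have hm := mem_ribbonCells.mp hc
    have hcn : (i + m₁, j) ∈ ribbonCells (m₁ + m₂) := by rw [mem_ribbonCells]; omega
    show glueEntry m₁ m₂ T₁ T₂ (i + m₁, j) = _
    rw [glueEntry_of_mem hcn, if_neg (show ¬(i + m₁ < m₁) by omega),
      if_neg (show ¬(i + m₁ = m₁) by omega), show i + m₁ - m₁ = i by omega]
  · have hm : ¬(1 ≤ i ∧ 1 ≤ j ∧ m₂ ≤ i + j ∧ i + j ≤ m₂ + 1) := fun h =>
      hc (mem_ribbonCells.mpr h)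
    rw [T₂.outside _ hc]
    by_cases hcn : (i + m₁, j) ∈ ribbonCells (m₁ + m₂)
    · have hmn := mem_ribbonCells.mp hcn
      show glueEntry m₁ m₂ T₁ T₂ (i + m₁, j) = 0
      rw [glueEntry_of_mem hcn, if_neg (show ¬(i + m₁ < m₁) by omega),
        if_neg (show ¬(i + m₁ = m₁) by omega)]
      exact T₂.outside _ (fun h => hm (by have := mem_ribbonCells.mp h; omega))
    · exact (glue m₁ m₂ h₁ h₂ T₁ T₂).outside _ hcn

lemma glue_entry_mid (m₁ m₂ : ℕ) (h₁ : 1 ≤ m₁) (h₂ : 1 ≤ m₂)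
    (T₁ : RibbonSSYT m₁ 1) (T₂ : RibbonSSYT m₂ 2) :
    (glue m₁ m₂ h₁ h₂ T₁ T₂).entry (m₁, m₂) = 1 := by
  have hcn : (m₁, m₂) ∈ ribbonCells (m₁ + m₂) := by rw [mem_ribbonCells]; omega
  show glueEntry m₁ m₂ T₁ T₂ (m₁, m₂) = 1
  rw [glueEntry_of_mem hcn]
  simp

lemma cells_decomp (m₁ m₂ : ℕ) (h₁ : 1 ≤ m₁) (h₂ : 1 ≤ m₂) :
    ribbonCells (m₁ + m₂) = insert (m₁, m₂)
      (((ribbonCells m₁).image (fun c => (c.1, c.2 + m₂))) ∪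
       ((ribbonCells m₂).image (fun c => (c.1 + m₁, c.2)))) := by
  ext ⟨i, j⟩
  simp only [Finset.mem_insert, Finset.mem_union, Finset.mem_image, mem_ribbonCells,
    Prod.mk.injEq, Prod.exists, mem_ribbonCells']
  constructor
  · rintro ⟨hi, hj, hn, hn'⟩
    by_cases hmid : i = m₁ ∧ j = m₂
    · exact Or.inl ⟨hmid.1, hmid.2⟩
    · by_cases hup : i ≤ m₁
      · refine Or.inr (Or.inl ⟨i, j - m₂, ?_, rfl, by omega⟩)
        omega
      · refine Or.inr (Or.inr ⟨i - m₁, j, ?_, by omega, rfl⟩)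
        omega
  · rintro (⟨rfl, rfl⟩ | ⟨a, b, hab, rfl, rfl⟩ | ⟨a, b, hab, rfl, rfl⟩)
    · omega
    · omega
    · omega

lemma glue_content (m₁ m₂ : ℕ) (h₁ : 1 ≤ m₁) (h₂ : 1 ≤ m₂)
    (T₁ : RibbonSSYT m₁ 1) (T₂ : RibbonSSYT m₂ 2) (k : ℕ) :
    ((ribbonCells (m₁ + m₂)).filter
        (fun c => (glue m₁ m₂ h₁ h₂ T₁ T₂).entry c = k)).card
      = (if k = 1 then 1 else 0)
        + ((ribbonCells m₂).filter (fun c => T₂.entry c = k)).card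
        + ((ribbonCells m₁).filter (fun c => T₁.entry c = k)).card := by
  classical
  set G := glue m₁ m₂ h₁ h₂ T₁ T₂ with hG
  set up := (ribbonCells m₁).image (fun c => (c.1, c.2 + m₂)) with hup
  set dn := (ribbonCells m₂).image (fun c => (c.1 + m₁, c.2)) with hdn
  have hmid_notmem : (m₁, m₂) ∉ up ∪ dn := by
    simp only [hup, hdn, Finset.mem_union, Finset.mem_image, Prod.mk.injEq, Prod.exists,
      mem_ribbonCells, not_or, not_exists]
    constructor
    · rintro a b ⟨hab, h1, h2⟩; omega
    · rintro a b ⟨hab, h1, h2⟩; omega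
  have hdisj : Disjoint up dn := by
    rw [Finset.disjoint_left]
    rintro ⟨i, j⟩ hiu hid
    simp only [hup, hdn, Finset.mem_image, Prod.mk.injEq, Prod.exists, mem_ribbonCells]
      at hiu hid
    obtain ⟨a, b, hab, rfl, rfl⟩ := hiu
    obtain ⟨a', b', hab', h1, h2⟩ := hid
    omega
  have hupcard : (up.filter (fun c => G.entry c = k)).card
      = ((ribbonCells m₁).filter (fun c => T₁.entry c = k)).card := by
    rw [hup, Finset.filter_image]
    rw [Finset.card_image_of_injOn (by
      rintro ⟨a, b⟩ _ ⟨a', b'⟩ _ h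
      simp only [Prod.mk.injEq] at h ⊢
      omega)]
    congr 1
    apply Finset.filter_congr
    rintro ⟨a, b⟩ hab
    have hm := mem_ribbonCells.mp hab
    simp only
    rw [glue_entry_up m₁ m₂ h₁ h₂ T₁ T₂ a b hm.2.1]
  have hdncard : (dn.filter (fun c => G.entry c = k)).card
      = ((ribbonCells m₂).filter (fun c => T₂.entry c = k)).card := by
    rw [hdn, Finset.filter_image]
    rw [Finset.card_image_of_injOn (by
      rintro ⟨a, b⟩ _ ⟨a', b'⟩ _ h
      simp only [Prod.mk.injEq] at h ⊢
      omega)]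
    congr 1
    apply Finset.filter_congr
    rintro ⟨a, b⟩ hab
    have hm := mem_ribbonCells.mp hab
    simp only
    rw [glue_entry_down m₁ m₂ h₁ h₂ T₁ T₂ a b hm.1]
  rw [cells_decomp m₁ m₂ h₁ h₂, Finset.filter_insert]
  by_cases hk : k = 1
  · rw [if_pos (by rw [glue_entry_mid]; exact hk.symm)]
    rw [Finset.card_insert_of_notMem (fun h => hmid_notmem (Finset.filter_subset _ _ h))]
    rw [Finset.filter_union, Finset.card_union_of_disjoint
      (Finset.disjoint_filter_filter hdisj), hupcard, hdncard, if_pos hk]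
    ring
  · rw [if_neg (by rw [glue_entry_mid]; exact fun h => hk h.symm)]
    rw [Finset.filter_union, Finset.card_union_of_disjoint
      (Finset.disjoint_filter_filter hdisj), hupcard, hdncard, if_neg hk]
    ring

lemma sigma_ext {lo n n' : ℕ} {T : RibbonSSYT n lo} {T' : RibbonSSYT n' lo}
    (h : n = n') (h' : T.entry = T'.entry) :
    (⟨n, T⟩ : (k : ℕ) × RibbonSSYT k lo) = ⟨n', T'⟩ := by
  subst h
  exact congrArg _ (RibbonSSYT.ext' h')

/-- the part of `T` strictly above-right of the split cell `(i₀, m₂)`, as a tableau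
of shape δ_{i₀}. -/
def upperT (i₀ m₂ : ℕ) (T : RibbonSSYT (i₀ + m₂) 1) : RibbonSSYT i₀ 1 where
  entry := fun c => if c ∈ ribbonCells i₀ then T.entry (c.1, c.2 + m₂) else 0
  lo_le := by
    rintro ⟨i, j⟩ hc
    have hm := mem_ribbonCells.mp hc
    dsimp only
    rw [if_pos hc]
    exact T.lo_le _ (by rw [mem_ribbonCells]; omega)
  outside := by intro c hc; rw [if_neg hc]
  rowWeak := by
    intro i j hc hc'
    have hm := mem_ribbonCells.mp hc
    have hm' := mem_ribbonCells.mp hc'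
    dsimp only
    rw [if_pos hc, if_pos hc']
    have he : j + 1 + m₂ = (j + m₂) + 1 := by omega
    rw [he]
    exact T.rowWeak i (j + m₂) (by rw [mem_ribbonCells]; omega)
      (by rw [mem_ribbonCells]; omega)
  colStrict := by
    intro i j hc hc'
    have hm := mem_ribbonCells.mp hc
    have hm' := mem_ribbonCells.mp hc'
    dsimp only
    rw [if_pos hc, if_pos hc']
    exact T.colStrict i (j + m₂) (by rw [mem_ribbonCells]; omega)
      (by rw [mem_ribbonCells]; omega)

/-- the part of `T` strictly below-left of the split cell `(i₀, m₂)`, as a tableau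
of shape δ_{m₂}, provided all its entries are ≥ 2. -/
def lowerT (i₀ m₂ : ℕ) (T : RibbonSSYT (i₀ + m₂) 1)
    (hge : ∀ c ∈ ribbonCells m₂, 2 ≤ T.entry (c.1 + i₀, c.2)) : RibbonSSYT m₂ 2 where
  entry := fun c => if c ∈ ribbonCells m₂ then T.entry (c.1 + i₀, c.2) else 0
  lo_le := by
    rintro ⟨i, j⟩ hc
    dsimp only
    rw [if_pos hc]
    exact hge _ hc
  outside := by intro c hc; rw [if_neg hc]
  rowWeak := by
    intro i j hc hc'
    have hm := mem_ribbonCells.mp hc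
    have hm' := mem_ribbonCells.mp hc'
    dsimp only
    rw [if_pos hc, if_pos hc']
    exact T.rowWeak (i + i₀) j (by rw [mem_ribbonCells]; omega)
      (by rw [mem_ribbonCells]; omega)
  colStrict := by
    intro i j hc hc'
    have hm := mem_ribbonCells.mp hc
    have hm' := mem_ribbonCells.mp hc'
    dsimp only
    rw [if_pos hc, if_pos hc']
    have he : i + 1 + i₀ = (i + i₀) + 1 := by omega
    rw [he]
    exact T.colStrict (i + i₀) j (by rw [mem_ribbonCells]; omega)
      (by rw [mem_ribbonCells]; omega)

/-- recovery: gluing the two extracted parts gives back `T`. -/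
lemma glue_recover (i₀ m₂ : ℕ) (h₁ : 1 ≤ i₀) (h₂ : 1 ≤ m₂)
    (T : RibbonSSYT (i₀ + m₂) 1)
    (hge : ∀ c ∈ ribbonCells m₂, 2 ≤ T.entry (c.1 + i₀, c.2))
    (hmid : T.entry (i₀, m₂) = 1) :
    (glue i₀ m₂ h₁ h₂ (upperT i₀ m₂ T) (lowerT i₀ m₂ T hge)).entry = T.entry := by
  funext c
  obtain ⟨i, j⟩ := c
  by_cases hc : (i, j) ∈ ribbonCells (i₀ + m₂)
  · have hm := mem_ribbonCells.mp hc
    show glueEntry i₀ m₂ _ _ (i, j) = _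
    rw [glueEntry_of_mem hc]
    by_cases hi : i < i₀
    · rw [if_pos hi]
      show (if (i, j - m₂) ∈ ribbonCells i₀ then T.entry (i, (j - m₂) + m₂) else 0) = _
      rw [if_pos (by rw [mem_ribbonCells]; omega), show j - m₂ + m₂ = j by omega]
    · rw [if_neg hi]
      by_cases hieq : i = i₀
      · rw [if_pos hieq]
        by_cases hj : j = m₂
        · rw [if_pos hj, hieq, hj, hmid]
        · rw [if_neg hj]
          show (if (i₀, j - m₂) ∈ ribbonCells i₀ then T.entry (i₀, (j - m₂) + m₂) else 0) = _
          rw [if_pos (by rw [mem_ribbonCells]; omega), show j - m₂ + m₂ = j by omega, hieq]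
      · rw [if_neg hieq]
        show (if (i - i₀, j) ∈ ribbonCells m₂ then T.entry ((i - i₀) + i₀, j) else 0) = _
        rw [if_pos (by rw [mem_ribbonCells]; omega), show i - i₀ + i₀ = i by omega]
  · rw [T.outside _ hc]
    exact (glue i₀ m₂ h₁ h₂ _ _).outside _ hc

/-- if a cell contains a 1 and n ≥ 2, the left cell of its row contains 1 and the row is ≤ n-1. -/
lemma one_left_cell {n : ℕ} (hn : 2 ≤ n) (T : RibbonSSYT n 1) {i j : ℕ}
    (hc : (i, j) ∈ ribbonCells n) (h1 : T.entry (i, j) = 1) :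
    i + 1 ≤ n ∧ T.entry (i, n - i) = 1 := by
  have hm := mem_ribbonCells.mp hc
  have hin : i + 1 ≤ n := by
    by_contra hcon
    have hieq : i = n := by omega
    have hj1 : j = 1 := by omega
    have habove : (n - 1, 1) ∈ ribbonCells n := by rw [mem_ribbonCells]; omega
    have := T.colStrict (n - 1) 1 habove (by rw [mem_ribbonCells]; omega)
    have hlo := T.lo_le _ habove
    rw [show n - 1 + 1 = n by omega] at this
    rw [hieq, hj1] at h1
    omega
  refine ⟨hin, ?_⟩
  rcases (by omega : i + j = n ∨ i + j = n + 1) with h | h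
  · rw [show n - i = j by omega]; exact h1
  · have hl : (i, j - 1) ∈ ribbonCells n := by rw [mem_ribbonCells]; omega
    have hw := T.rowWeak i (j - 1) hl (by rw [mem_ribbonCells]; omega)
    rw [show j - 1 + 1 = j by omega, h1] at hw
    have hlo := T.lo_le _ hl
    rw [show n - i = j - 1 by omega]
    omega

/-- content of a tableau as a finitely supported function -/
def cnt {n lo : ℕ} (T : RibbonSSYT n lo) : ℕ →₀ ℕ :=
  ∑ c ∈ ribbonCells n, Finsupp.single (T.entry c) 1

lemma cnt_apply {n lo : ℕ} (T : RibbonSSYT n lo) (k : ℕ) :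
    cnt T k = ((ribbonCells n).filter (fun c => T.entry c = k)).card := by
  rw [cnt, Finset.card_filter, Finset.sum_apply']
  exact Finset.sum_congr rfl fun c _ => by rw [Finsupp.single_apply]

lemma cells_one : ribbonCells 1 = {(1, 1)} := by
  ext ⟨i, j⟩
  simp only [mem_ribbonCells, Finset.mem_singleton, Prod.mk.injEq]
  omega

def oneTab : RibbonSSYT 1 1 where
  entry := fun c => if c = (1, 1) then 1 else 0
  lo_le := by
    rintro ⟨i, j⟩ hc
    have hm := mem_ribbonCells.mp hc
    have h1 : i = 1 := by omega
    have h2 : j = 1 := by omega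
    subst h1; subst h2; simp
  outside := by
    intro c hc
    rw [if_neg]
    rintro rfl
    exact hc (by rw [mem_ribbonCells]; omega)
  rowWeak := by
    intro i j hc hc'
    have hm := mem_ribbonCells.mp hc
    have hm' := mem_ribbonCells.mp hc'
    omega
  colStrict := by
    intro i j hc hc'
    have hm := mem_ribbonCells.mp hc
    have hm' := mem_ribbonCells.mp hc'
    omega

lemma oneTab_content (k : ℕ) :
    ((ribbonCells 1).filter (fun c => oneTab.entry c = k)).card = Finsupp.single 1 1 k := by
  rw [cells_one]
  rw [Finsupp.single_apply]
  by_cases hk : k = 1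
  · subst hk
    rw [if_pos rfl, Finset.filter_singleton, if_pos (by simp [oneTab]), Finset.card_singleton]
  · rw [if_neg (fun h => hk h.symm), Finset.filter_singleton,
      if_neg (by simp [oneTab]; omega), Finset.card_empty]

lemma glue_no_one_below (m₁ m₂ : ℕ) (h₁ : 1 ≤ m₁) (h₂ : 1 ≤ m₂)
    (T₁ : RibbonSSYT m₁ 1) (T₂ : RibbonSSYT m₂ 2) (i j : ℕ) (hi : m₁ < i) :
    (glue m₁ m₂ h₁ h₂ T₁ T₂).entry (i, j) ≠ 1 := by
  by_cases hc : (i, j) ∈ ribbonCells (m₁ + m₂)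
  · show glueEntry m₁ m₂ T₁ T₂ (i, j) ≠ 1
    rw [glueEntry_of_mem hc, if_neg (by omega), if_neg (by omega)]
    by_cases hc2 : (i - m₁, j) ∈ ribbonCells m₂
    · have := T₂.lo_le _ hc2
      omega
    · rw [T₂.outside _ hc2]; omega
  · rw [(glue m₁ m₂ h₁ h₂ T₁ T₂).outside _ hc]; omega

/-! ### The case m 1 = 0 : relax/tighten -/

def relaxT {n : ℕ} (T : RibbonSSYT n 2) : RibbonSSYT n 1 where
  entry := T.entry
  lo_le := fun c hc => le_trans (by norm_num) (T.lo_le c hc)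
  outside := T.outside
  rowWeak := T.rowWeak
  colStrict := T.colStrict

def tightenT {n : ℕ} (T : RibbonSSYT n 1) (h : ∀ c ∈ ribbonCells n, T.entry c ≠ 1) :
    RibbonSSYT n 2 where
  entry := T.entry
  lo_le := fun c hc => by have := T.lo_le c hc; have := h c hc; omega
  outside := T.outside
  rowWeak := T.rowWeak
  colStrict := T.colStrict

lemma count_zero (m : ℕ →₀ ℕ) (hm : m 1 = 0) :
    Nat.card (TabSet 1 m) = Nat.card (TabSet 2 m) := by
  apply Nat.card_eq_of_bijective (fun p : TabSet 1 m =>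
    (⟨⟨p.val.1, tightenT p.val.2 (by
        rintro c hc h1
        have hcard := p.prop.2 1
        rw [hm] at hcard
        rw [Finset.card_eq_zero] at hcard
        have : c ∈ (ribbonCells p.val.1).filter (fun c => p.val.2.entry c = 1) := by
          simp [hc, h1]
        rw [hcard] at this
        exact absurd this (Finset.notMem_empty c))⟩,
      p.prop.1, p.prop.2⟩ : TabSet 2 m))
  constructor
  · rintro ⟨⟨n, T⟩, h⟩ ⟨⟨n', T'⟩, h'⟩ heq
    have h2 := (Subtype.ext_iff.mp heq :)
    simp only at h2
    apply Subtype.ext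
    simp only
    have hfst := congrArg Sigma.fst h2
    simp only at hfst
    subst hfst
    have hsnd := eq_of_heq (Sigma.mk.inj_iff.mp h2).2
    exact congrArg _ (RibbonSSYT.ext' (congrArg RibbonSSYT.entry hsnd :))
  · rintro ⟨⟨n, T⟩, h1, h2⟩
    refine ⟨⟨⟨n, relaxT T⟩, h1, h2⟩, ?_⟩
    apply Subtype.ext
    simp only
    exact sigma_ext rfl rfl

/-! ### The case m 1 ≥ 1 -/

lemma tabset2_empty (m : ℕ →₀ ℕ) (hm : 1 ≤ m 1) : IsEmpty (TabSet 2 m) := by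
  constructor
  rintro ⟨⟨n, T⟩, h1, h2⟩
  have h21 : ((ribbonCells n).filter (fun c => T.entry c = 1)).card = m 1 := h2 1
  have hpos : 0 < ((ribbonCells n).filter (fun c => T.entry c = 1)).card := by omega
  rw [Finset.card_pos] at hpos
  obtain ⟨c, hc⟩ := hpos
  rw [Finset.mem_filter] at hc
  have := T.lo_le c hc.1
  omega

def SigT (m : ℕ →₀ ℕ) :=
  (x : ↥(Finset.HasAntidiagonal.antidiagonal (m - Finsupp.single 1 1))) ×
    (TabSet 2 x.val.1 × TabSet 1 x.val.2)

instance (m : ℕ →₀ ℕ) : Finite (SigT m) := by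
  unfold SigT; infer_instance

def toTab (m : ℕ →₀ ℕ) (hm : 1 ≤ m 1) :
    PLift (m = Finsupp.single 1 1) ⊕ SigT m → TabSet 1 m
  | Sum.inl h => ⟨⟨1, oneTab⟩, le_refl 1, fun k => by rw [oneTab_content k, h.down]⟩
  | Sum.inr ⟨⟨⟨p, q⟩, hx⟩, ⟨⟨⟨n₂, t₂⟩, hn₂, hc₂⟩, ⟨⟨n₁, t₁⟩, hn₁, hc₁⟩⟩⟩ =>
      ⟨⟨n₁ + n₂, glue n₁ n₂ hn₁ hn₂ t₁ t₂⟩, le_trans hn₁ (Nat.le_add_right n₁ n₂), fun k => by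
        have hc₂' : ∀ k, ((ribbonCells n₂).filter (fun c => t₂.entry c = k)).card = p k := hc₂
        have hc₁' : ∀ k, ((ribbonCells n₁).filter (fun c => t₁.entry c = k)).card = q k := hc₁
        show ((ribbonCells (n₁ + n₂)).filter
          (fun c => (glue n₁ n₂ hn₁ hn₂ t₁ t₂).entry c = k)).card = m k
        rw [glue_content n₁ n₂ hn₁ hn₂ t₁ t₂ k, hc₂' k, hc₁' k]
        have hpq : p + q = m - Finsupp.single 1 1 := Finset.HasAntidiagonal.mem_antidiagonal.mp hx
        have hthis : p k + q k = m k - (Finsupp.single 1 1 : ℕ →₀ ℕ) k := by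
          rw [← Finsupp.add_apply, hpq]; exact Finsupp.tsub_apply m _ k
        have hs : (Finsupp.single 1 1 : ℕ →₀ ℕ) k = if 1 = k then 1 else 0 :=
          Finsupp.single_apply
        by_cases hk : k = 1
        · subst hk
          rw [if_pos rfl] at hs ⊢
          omega
        · rw [if_neg (fun h => hk h.symm)] at hs
          rw [if_neg hk]
          omega⟩

lemma toTab_bijective (m : ℕ →₀ ℕ) (hm : 1 ≤ m 1) : Function.Bijective (toTab m hm) := by
  constructor
  · -- injectivity
    rintro (⟨h⟩ | ⟨⟨⟨p, q⟩, hx⟩, ⟨⟨⟨n₂, t₂⟩, hn₂, hc₂⟩, ⟨⟨n₁, t₁⟩, hn₁, hc₁⟩⟩⟩)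
        (⟨h'⟩ | ⟨⟨⟨p', q'⟩, hx'⟩, ⟨⟨⟨n₂', t₂'⟩, hn₂', hc₂'⟩, ⟨⟨n₁', t₁'⟩, hn₁', hc₁'⟩⟩⟩) heq
    · cases h; cases h'; rfl
    · exfalso
      have h2 : (1 : ℕ) = n₁' + n₂' := congrArg Sigma.fst (Subtype.ext_iff.mp heq)
      have hn₁'' : 1 ≤ n₁' := hn₁'
      have hn₂'' : 1 ≤ n₂' := hn₂'
      omega
    · exfalso
      have h2 : n₁ + n₂ = (1 : ℕ) := congrArg Sigma.fst (Subtype.ext_iff.mp heq)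
      have hn₁'' : 1 ≤ n₁ := hn₁
      have hn₂'' : 1 ≤ n₂ := hn₂
      omega
    · have hsig : (⟨n₁ + n₂, glue n₁ n₂ hn₁ hn₂ t₁ t₂⟩ : (k : ℕ) × RibbonSSYT k 1)
          = ⟨n₁' + n₂', glue n₁' n₂' hn₁' hn₂' t₁' t₂'⟩ := Subtype.ext_iff.mp heq
      have hfst : n₁ + n₂ = n₁' + n₂' := congrArg Sigma.fst hsig
      have hent : (glue n₁ n₂ hn₁ hn₂ t₁ t₂).entry = (glue n₁' n₂' hn₁' hn₂' t₁' t₂').entry :=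
        congrArg (fun z : (k : ℕ) × RibbonSSYT k 1 => z.snd.entry) hsig
      have hn11 : n₁ = n₁' := by
        rcases Nat.lt_trichotomy n₁ n₁' with hlt | heqq | hgt
        · exfalso
          apply glue_no_one_below n₁ n₂ hn₁ hn₂ t₁ t₂ n₁' n₂' hlt
          rw [hent]
          exact glue_entry_mid n₁' n₂' hn₁' hn₂' t₁' t₂'
        · exact heqq
        · exfalso
          apply glue_no_one_below n₁' n₂' hn₁' hn₂' t₁' t₂' n₁ n₂ hgt
          rw [← hent]
          exact glue_entry_mid n₁ n₂ hn₁ hn₂ t₁ t₂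
      have hn22 : n₂ = n₂' := by omega
      subst hn11; subst hn22
      have ht₁ : t₁ = t₁' := by
        apply RibbonSSYT.ext'
        funext c
        obtain ⟨i, j⟩ := c
        by_cases hc : (i, j) ∈ ribbonCells n₁
        · have hmm := mem_ribbonCells.mp hc
          rw [← glue_entry_up n₁ n₂ hn₁ hn₂ t₁ t₂ i j hmm.2.1, hent,
            glue_entry_up n₁ n₂ hn₁' hn₂' t₁' t₂' i j hmm.2.1]
        · rw [t₁.outside _ hc, t₁'.outside _ hc]
      have ht₂ : t₂ = t₂' := by
        apply RibbonSSYT.ext'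
        funext c
        obtain ⟨i, j⟩ := c
        by_cases hc : (i, j) ∈ ribbonCells n₂
        · have hmm := mem_ribbonCells.mp hc
          rw [← glue_entry_down n₁ n₂ hn₁ hn₂ t₁ t₂ i j hmm.1, hent,
            glue_entry_down n₁ n₂ hn₁' hn₂' t₁' t₂' i j hmm.1]
        · rw [t₂.outside _ hc, t₂'.outside _ hc]
      have hp : p = p' := by
        ext k
        have a1 : ((ribbonCells n₂).filter (fun c => t₂.entry c = k)).card = p k := hc₂ k
        have a2 : ((ribbonCells n₂).filter (fun c => t₂'.entry c = k)).card = p' k := hc₂' k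
        rw [← a1, ← a2, ht₂]
      have hq : q = q' := by
        ext k
        have a1 : ((ribbonCells n₁).filter (fun c => t₁.entry c = k)).card = q k := hc₁ k
        have a2 : ((ribbonCells n₁).filter (fun c => t₁'.entry c = k)).card = q' k := hc₁' k
        rw [← a1, ← a2, ht₁]
      subst hp; subst hq; subst ht₁; subst ht₂
      rfl
  · -- surjectivity
    rintro ⟨⟨n, T⟩, hn, hcont⟩
    have hn' : 1 ≤ n := hn
    have hcont' : ∀ k, ((ribbonCells n).filter (fun c => T.entry c = k)).card = m k := hcont
    have hone : ∃ c ∈ ribbonCells n, T.entry c = 1 := by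
      have := hcont' 1
      have hpos : 0 < ((ribbonCells n).filter (fun c => T.entry c = 1)).card := by omega
      rw [Finset.card_pos] at hpos
      obtain ⟨c, hc⟩ := hpos
      rw [Finset.mem_filter] at hc
      exact ⟨c, hc.1, hc.2⟩
    obtain ⟨⟨ci, cj⟩, hcmem, hc1⟩ := hone
    rcases Nat.lt_or_ge n 2 with hn2 | hn2
    · -- n = 1
      have hn1 : n = 1 := by omega
      subst hn1
      have hceq : (ci, cj) = ((1 : ℕ), (1 : ℕ)) := by
        have := mem_ribbonCells.mp hcmem; simp only [Prod.mk.injEq]; omega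
      rw [hceq] at hc1
      have hT : T.entry = oneTab.entry := by
        funext c
        by_cases hc : c ∈ ribbonCells 1
        · rw [cells_one, Finset.mem_singleton] at hc
          subst hc
          rw [hc1]
          simp [oneTab]
        · rw [T.outside _ hc, oneTab.outside _ hc]
      have hme : m = Finsupp.single 1 1 := by
        ext k
        rw [← hcont' k]
        simp only [hT]
        exact oneTab_content k
      refine ⟨Sum.inl ⟨hme⟩, ?_⟩
      exact Subtype.ext (sigma_ext rfl hT.symm)
    · -- n ≥ 2
      obtain ⟨i₀, h₁, hin, hmid0, hmaxv⟩ :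
          ∃ i₀, 1 ≤ i₀ ∧ i₀ + 1 ≤ n ∧ T.entry (i₀, n - i₀) = 1 ∧
            ∀ i, 1 ≤ i → i + 1 ≤ n → T.entry (i, n - i) = 1 → i ≤ i₀ := by
        classical
        have hSne : ((Finset.Icc 1 (n - 1)).filter (fun i => T.entry (i, n - i) = 1)).Nonempty := by
          refine ⟨ci, ?_⟩
          rw [Finset.mem_filter, Finset.mem_Icc]
          have holc := one_left_cell hn2 T hcmem hc1
          have hmm := mem_ribbonCells.mp hcmem
          exact ⟨⟨by omega, by omega⟩, holc.2⟩
        have hi₀S := Finset.max'_mem _ hSne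
        rw [Finset.mem_filter, Finset.mem_Icc] at hi₀S
        refine ⟨_, hi₀S.1.1, by omega, hi₀S.2, ?_⟩
        intro i hi1 hi2 hie
        exact Finset.le_max' _ i (by rw [Finset.mem_filter, Finset.mem_Icc]; exact ⟨⟨hi1, by omega⟩, hie⟩)
      obtain ⟨m₂, rfl⟩ : ∃ m₂, n = i₀ + m₂ := ⟨n - i₀, by omega⟩
      have h₂ : 1 ≤ m₂ := by omega
      have hmid : T.entry (i₀, m₂) = 1 := by
        rwa [show i₀ + m₂ - i₀ = m₂ by omega] at hmid0
      have hge : ∀ c ∈ ribbonCells m₂, 2 ≤ T.entry (c.1 + i₀, c.2) := by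
        rintro ⟨a, b⟩ hc
        show 2 ≤ T.entry (a + i₀, b)
        have hmm := mem_ribbonCells.mp hc
        have hmem : (a + i₀, b) ∈ ribbonCells (i₀ + m₂) := by rw [mem_ribbonCells]; omega
        have hlo := T.lo_le _ hmem
        by_contra hcon
        have h1 : T.entry (a + i₀, b) = 1 := by omega
        have holc := one_left_cell hn2 T hmem h1
        have := hmaxv (a + i₀) (by omega) (by omega) holc.2
        omega
      have hrec : (glue i₀ m₂ h₁ h₂ (upperT i₀ m₂ T) (lowerT i₀ m₂ T hge)).entry = T.entry :=
        glue_recover i₀ m₂ h₁ h₂ T hge hmid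
      have hgc : ∀ k, m k = (if k = 1 then 1 else 0)
          + cnt (lowerT i₀ m₂ T hge) k + cnt (upperT i₀ m₂ T) k := by
        intro k
        have hgck := glue_content i₀ m₂ h₁ h₂ (upperT i₀ m₂ T) (lowerT i₀ m₂ T hge) k
        simp only [hrec] at hgck
        rw [hcont' k] at hgck
        rw [hgck, cnt_apply, cnt_apply]
      have hxmem : (cnt (lowerT i₀ m₂ T hge), cnt (upperT i₀ m₂ T)) ∈
          Finset.HasAntidiagonal.antidiagonal (m - Finsupp.single 1 1) := by
        rw [Finset.HasAntidiagonal.mem_antidiagonal]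
        show cnt (lowerT i₀ m₂ T hge) + cnt (upperT i₀ m₂ T) = m - Finsupp.single 1 1
        ext k
        rw [Finsupp.add_apply, Finsupp.tsub_apply]
        have hgk := hgc k
        have hs : (Finsupp.single 1 1 : ℕ →₀ ℕ) k = if 1 = k then 1 else 0 :=
          Finsupp.single_apply
        by_cases hk : k = 1
        · subst hk
          rw [if_pos rfl] at hs hgk
          omega
        · rw [if_neg (fun hh => hk hh.symm)] at hs
          rw [if_neg hk] at hgk
          omega
      refine ⟨Sum.inr ⟨⟨(cnt (lowerT i₀ m₂ T hge), cnt (upperT i₀ m₂ T)), hxmem⟩,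
        ⟨⟨⟨m₂, lowerT i₀ m₂ T hge⟩, h₂, fun k => (cnt_apply _ k).symm⟩,
         ⟨⟨i₀, upperT i₀ m₂ T⟩, h₁, fun k => (cnt_apply _ k).symm⟩⟩⟩, ?_⟩
      exact Subtype.ext (sigma_ext rfl hrec)

lemma count_pos (m : ℕ →₀ ℕ) (hm : 1 ≤ m 1) :
    Nat.card (TabSet 1 m) = (if m = Finsupp.single 1 1 then 1 else 0)
      + ∑ x ∈ Finset.HasAntidiagonal.antidiagonal (m - Finsupp.single 1 1),
          Nat.card (TabSet 2 x.1) * Nat.card (TabSet 1 x.2) := by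
  classical
  haveI hsub : Subsingleton (PLift (m = Finsupp.single 1 1)) :=
    ⟨fun a b => by cases a; cases b; rfl⟩
  haveI : Finite (PLift (m = Finsupp.single 1 1)) := Finite.of_subsingleton
  rw [← Nat.card_eq_of_bijective _ (toTab_bijective m hm), Nat.card_sum]
  congr 1
  · by_cases h : m = Finsupp.single 1 1
    · rw [if_pos h]
      haveI : Unique (PLift (m = Finsupp.single 1 1)) :=
        ⟨⟨⟨h⟩⟩, fun a => Subsingleton.elim a _⟩
      exact Nat.card_unique
    · rw [if_neg h]
      haveI : IsEmpty (PLift (m = Finsupp.single 1 1)) := ⟨fun a => h a.down⟩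
      exact Nat.card_of_isEmpty
  · letI I2 : ∀ x : ↥(Finset.HasAntidiagonal.antidiagonal (m - Finsupp.single 1 1)),
        Fintype (TabSet 2 x.val.1) := fun x => Fintype.ofFinite _
    letI I3 : ∀ x : ↥(Finset.HasAntidiagonal.antidiagonal (m - Finsupp.single 1 1)),
        Fintype (TabSet 1 x.val.2) := fun x => Fintype.ofFinite _
    rw [Nat.card_congr (show SigT m ≃ (x : ↥(Finset.HasAntidiagonal.antidiagonal (m - Finsupp.single 1 1))) ×
      (TabSet 2 x.val.1 × TabSet 1 x.val.2) from Equiv.refl _)]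
    rw [Nat.card_eq_fintype_card, Fintype.card_sigma]
    rw [← Finset.sum_coe_sort (Finset.HasAntidiagonal.antidiagonal (m - Finsupp.single 1 1))
      (fun x => Nat.card (TabSet 2 x.1) * Nat.card (TabSet 1 x.2))]
    apply Finset.sum_congr rfl
    intro x _
    rw [Fintype.card_prod, Nat.card_eq_fintype_card (α := TabSet 2 x.val.1),
      Nat.card_eq_fintype_card (α := TabSet 1 x.val.2)]

/-- The functional equation 𝓕(x₁,x₂,…) - 𝓕(x₂,x₃,…) = x₁ + x₁·𝓕(x₂,x₃,…)·𝓕(x₁,x₂,…). -/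
theorem ribbon_generating_function_equation :
    F 1 - F 2 = (MvPowerSeries.X 1 : MvPowerSeries ℕ ℚ) + MvPowerSeries.X 1 * F 2 * F 1 := by
  classical
  rw [sub_eq_iff_eq_add']
  apply MvPowerSeries.ext
  intro m
  rw [map_add, map_add, mul_assoc]
  have hF : ∀ lo, (MvPowerSeries.coeff m) (F lo) = (Nat.card (TabSet lo m) : ℚ) :=
    fun lo => rfl
  have hX : (MvPowerSeries.coeff m) (MvPowerSeries.X 1 : MvPowerSeries ℕ ℚ)
      = if m = Finsupp.single 1 1 then 1 else 0 := MvPowerSeries.coeff_X m 1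
  have hsum : ∀ p : (ℕ →₀ ℕ) × (ℕ →₀ ℕ),
      (MvPowerSeries.coeff p.1) (F 2) * (MvPowerSeries.coeff p.2) (F 1)
        = ((Nat.card (TabSet 2 p.1) * Nat.card (TabSet 1 p.2) : ℕ) : ℚ) := fun p => by
    push_cast
    rfl
  by_cases hm : 1 ≤ m 1
  · -- m 1 ≥ 1
    have hmem : ((Finsupp.single 1 1 : ℕ →₀ ℕ), m - Finsupp.single 1 1)
        ∈ Finset.HasAntidiagonal.antidiagonal m := by
      rw [Finset.HasAntidiagonal.mem_antidiagonal]
      exact add_tsub_cancel_of_le (Finsupp.single_le_iff.mpr hm)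
    have hXmul : (MvPowerSeries.coeff m) (MvPowerSeries.X 1 * (F 2 * F 1)) =
        (MvPowerSeries.coeff (m - Finsupp.single 1 1)) (F 2 * F 1) := by
      rw [MvPowerSeries.coeff_mul]
      rw [Finset.sum_eq_single ((Finsupp.single 1 1 : ℕ →₀ ℕ), m - Finsupp.single 1 1)]
      · rw [MvPowerSeries.coeff_X, if_pos rfl, one_mul]
      · rintro ⟨p, q⟩ hb hne
        rw [MvPowerSeries.coeff_X]
        by_cases hp : p = Finsupp.single 1 1
        · exfalso
          apply hne
          subst hp
          have hpq := Finset.HasAntidiagonal.mem_antidiagonal.mp hb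
          have hq : q = m - Finsupp.single 1 1 := by
            rw [add_comm] at hpq
            exact eq_tsub_of_add_eq hpq
          rw [hq]
        · rw [if_neg hp, zero_mul]
      · intro habs
        exact absurd hmem habs
    rw [hXmul, MvPowerSeries.coeff_mul]
    rw [hF 1, hF 2]
    have hN2 : Nat.card (TabSet 2 m) = 0 := @Nat.card_of_isEmpty _ (tabset2_empty m hm)
    rw [count_pos m hm, hN2, hX]
    rw [Finset.sum_congr rfl (fun p _ => hsum p)]
    push_cast [apply_ite (fun (k : ℕ) => (k : ℚ))]
    ring
  · -- m 1 = 0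
    have hm0 : m 1 = 0 := by omega
    rw [hF 1, hF 2, count_zero m hm0]
    have hXz : (MvPowerSeries.coeff m) (MvPowerSeries.X 1 : MvPowerSeries ℕ ℚ) = 0 := by
      rw [hX, if_neg]
      intro h
      rw [h] at hm0
      simp at hm0
    have hmul0 : (MvPowerSeries.coeff m) (MvPowerSeries.X 1 * (F 2 * F 1)) = 0 := by
      rw [MvPowerSeries.coeff_mul]
      apply Finset.sum_eq_zero
      rintro ⟨p, q⟩ hb
      rw [MvPowerSeries.coeff_X]
      by_cases hp : p = Finsupp.single 1 1
      · exfalso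
        have hpq := Finset.HasAntidiagonal.mem_antidiagonal.mp hb
        have := DFunLike.congr_fun hpq 1
        rw [Finsupp.add_apply, hp] at this
        simp [hm0] at this
      · rw [if_neg hp, zero_mul]
    rw [hXz, hmul0]
    ring

end
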